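/- Let e be a navigational expression over unlabeled graphs built from ∅, id, the edge label, composition, union, transitive closure, converse, intersection, and projections. If there is some unlabeled tree on which e evaluates to a nonempty relation, then there exists k ≥ 0 such that for every unlabeled tree T: e evaluates to a nonempty relation on T if and only if E^k evaluates to a nonempty relation on T (where E is the edge relation and E^0 = id), equivalently if and only if depth(T) ≥ k. -/

import Mathlib

/-- An unlabeled tree. -/
structure DTree (V : Type) where
  E : V → V → Prop
  acyclic : ∀ v, ¬ Relation.TransGen E v v
  root : V
  root_no_in : ∀ m, ¬ E m root
  in_unique : ∀ n, n ≠ root → ∃! m, E m n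

/-- A chain: a tree in which every node has at most one child. -/
structure DChain (V : Type) extends DTree V where
  at_most_one_child : ∀ m n n', E m n → E m n' → n = n'

/-- k-fold composition of a relation (relPow R 0 = equality). -/
def relPow {V : Type} (R : V → V → Prop) : ℕ → V → V → Prop
  | 0 => fun m n => m = n
  | k + 1 => Relation.Comp R (relPow R k)

/-- Navigational expressions over a single edge relation: ∅, id, the edge
label, composition, union, transitive closure, converse, intersection,
and projections. -/
inductive UExpr : Type
  | empty : UExpr
  | id : UExpr
  | edge : UExpr
  | comp (e₁ e₂ : UExpr) : UExpr
  | union (e₁ e₂ : UExpr) : UExpr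
  | tc (e : UExpr) : UExpr
  | conv (e : UExpr) : UExpr
  | inter (e₁ e₂ : UExpr) : UExpr
  | pr1 (e : UExpr) : UExpr
  | pr2 (e : UExpr) : UExpr

/-- Evaluation of an expression on an unlabeled graph. -/
def UExpr.eval {V : Type} (E : V → V → Prop) : UExpr → V → V → Prop
  | .empty => fun _ _ => False
  | .id => fun m n => m = n
  | .edge => E
  | .comp e₁ e₂ => Relation.Comp (e₁.eval E) (e₂.eval E)
  | .union e₁ e₂ => fun m n => e₁.eval E m n ∨ e₂.eval E m n
  | .tc e => Relation.TransGen (e.eval E)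
  | .conv e => fun m n => e.eval E n m
  | .inter e₁ e₂ => fun m n => e₁.eval E m n ∧ e₂.eval E m n
  | .pr1 e => fun m n => m = n ∧ ∃ x, e.eval E m x
  | .pr2 e => fun m n => m = n ∧ ∃ x, e.eval E x m

/- ### Auxiliary lemmas -/

lemma relPow_add {V : Type} (R : V → V → Prop) (a b : ℕ) :
    ∀ m n, relPow R (a + b) m n ↔ ∃ x, relPow R a m x ∧ relPow R b x n := by
  induction a with
  | zero =>
      intro m n
      simp [relPow]
  | succ a ih =>
      intro m n
      have h : a + 1 + b = (a + b) + 1 := by omega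
      rw [h]
      simp only [relPow, Relation.Comp]
      constructor
      · rintro ⟨y, hy, hyn⟩
        obtain ⟨x, hx1, hx2⟩ := (ih y n).mp hyn
        exact ⟨x, ⟨y, hy, hx1⟩, hx2⟩
      · rintro ⟨x, ⟨y, hy, hx1⟩, hx2⟩
        exact ⟨y, hy, (ih y n).mpr ⟨x, hx1, hx2⟩⟩

lemma relPow_succ_right {V : Type} (R : V → V → Prop) (k : ℕ) (m n : V) :
    relPow R (k + 1) m n ↔ ∃ x, relPow R k m x ∧ R x n := by
  rw [relPow_add R k 1]
  simp [relPow, Relation.Comp]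

lemma relPow_transGen {V : Type} (R : V → V → Prop) :
    ∀ k m n, relPow R (k + 1) m n → Relation.TransGen R m n := by
  intro k
  induction k with
  | zero =>
      intro m n h
      obtain ⟨x, hx, heq⟩ := h
      simp only [relPow] at heq
      subst heq
      exact Relation.TransGen.single hx
  | succ k ih =>
      intro m n h
      obtain ⟨x, hx, h2⟩ := h
      exact Relation.TransGen.head hx (ih x n h2)

section Tree

variable {V : Type} [Fintype V] (T : DTree V)

lemma tree_wf : WellFounded T.E := by
  haveI h1 : IsTrans V (Relation.TransGen T.E) :=
    ⟨fun _ _ _ => Relation.TransGen.trans⟩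
  haveI h2 : IsIrrefl V (Relation.TransGen T.E) := ⟨fun a => T.acyclic a⟩
  have hwf : WellFounded (Relation.TransGen T.E) :=
    Finite.wellFounded_of_trans_of_irrefl _
  exact Subrelation.wf (fun h => Relation.TransGen.single h) hwf

lemma exists_pathlen (v : V) : ∃ d, relPow T.E d T.root v := by
  refine (tree_wf T).induction (C := fun v => ∃ d, relPow T.E d T.root v) v ?_
  intro v ih
  by_cases hv : v = T.root
  · exact ⟨0, hv.symm⟩
  · obtain ⟨m, hm, _⟩ := T.in_unique v hv
    obtain ⟨d, hd⟩ := ih m hm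
    exact ⟨d + 1, (relPow_succ_right _ _ _ _).mpr ⟨m, hd, hm⟩⟩

lemma pathlen_unique :
    ∀ v (a b : ℕ), relPow T.E a T.root v → relPow T.E b T.root v → a = b := by
  intro v
  refine (tree_wf T).induction
    (C := fun v => ∀ a b, relPow T.E a T.root v → relPow T.E b T.root v → a = b) v ?_
  intro v ih a b ha hb
  match a, b with
  | 0, 0 => rfl
  | 0, b + 1 =>
      simp only [relPow] at ha
      subst ha
      exact absurd (relPow_transGen _ _ _ _ hb) (T.acyclic _)
  | a + 1, 0 =>
      simp only [relPow] at hb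
      subst hb
      exact absurd (relPow_transGen _ _ _ _ ha) (T.acyclic _)
  | a + 1, b + 1 =>
      obtain ⟨x, hx, hxv⟩ := (relPow_succ_right _ _ _ _).mp ha
      obtain ⟨y, hy, hyv⟩ := (relPow_succ_right _ _ _ _).mp hb
      have hvr : v ≠ T.root := fun h => T.root_no_in x (h ▸ hxv)
      obtain ⟨p, _, hp⟩ := T.in_unique v hvr
      have hxp : x = p := hp x hxv
      have hyp : y = p := hp y hyv
      subst hxp
      have : a = b := ih x hxv a b hx (hyp ▸ hy)
      omega

lemma anc_unique {V : Type} (T : DTree V) :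
    ∀ (k : ℕ) (v u u' : V), relPow T.E k u v → relPow T.E k u' v → u = u' := by
  intro k
  induction k with
  | zero =>
      intro v u u' h h'
      simp only [relPow] at h h'
      rw [h, h']
  | succ k ih =>
      intro v u u' h h'
      obtain ⟨x, hx, hxv⟩ := (relPow_succ_right _ _ _ _).mp h
      obtain ⟨y, hy, hyv⟩ := (relPow_succ_right _ _ _ _).mp h'
      have hvr : v ≠ T.root := fun hh => T.root_no_in x (hh ▸ hxv)
      obtain ⟨p, _, hp⟩ := T.in_unique v hvr
      have hxy : x = y := (hp x hxv).trans (hp y hyv).symm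
      exact ih x u u' hx (hxy ▸ hy)

noncomputable def dep (v : V) : ℕ := (exists_pathlen T v).choose

lemma dep_spec (v : V) : relPow T.E (dep T v) T.root v :=
  (exists_pathlen T v).choose_spec

noncomputable def tdepth : ℕ := Finset.univ.sup (dep T)

lemma dep_le (v : V) : dep T v ≤ tdepth T :=
  Finset.le_sup (Finset.mem_univ v)

lemma exists_dep_eq : ∃ v, dep T v = tdepth T := by
  have hne : (Finset.univ : Finset V).Nonempty := ⟨T.root, Finset.mem_univ _⟩
  obtain ⟨v, _, hv⟩ := Finset.exists_mem_eq_sup Finset.univ hne (dep T)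
  exact ⟨v, hv.symm⟩

lemma relPow_ne_iff (k : ℕ) :
    (∃ m n, relPow T.E k m n) ↔ k ≤ tdepth T := by
  constructor
  · rintro ⟨m, n, h⟩
    obtain ⟨a, ha⟩ := exists_pathlen T m
    have hcomp : relPow T.E (a + k) T.root n := (relPow_add _ a k _ _).mpr ⟨m, ha, h⟩
    have h2 := pathlen_unique T n (a + k) (dep T n) hcomp (dep_spec T n)
    have h3 := dep_le T n
    omega
  · intro hk
    obtain ⟨v, hv⟩ := exists_dep_eq T
    have hpath : relPow T.E (tdepth T) T.root v := hv ▸ dep_spec T v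
    have heq : tdepth T = k + (tdepth T - k) := by omega
    rw [heq] at hpath
    obtain ⟨x, hx, _⟩ := (relPow_add _ _ _ _ _).mp hpath
    exact ⟨T.root, x, hx⟩

end Tree

/-- The standard chain of depth `D` on `ℕ`. -/
def chE (D : ℕ) : ℕ → ℕ → Prop := fun i j => j = i + 1 ∧ j ≤ D

lemma eval_hom {V W : Type} {E : V → V → Prop} {F : W → W → Prop} (h : V → W)
    (hh : ∀ a b, E a b → F (h a) (h b)) :
    ∀ (e : UExpr) (m n : V), e.eval E m n → e.eval F (h m) (h n) := by
  intro e
  induction e with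
  | empty => intro m n hx; exact hx.elim
  | id => intro m n hx; exact congrArg h hx
  | edge => exact hh
  | comp e1 e2 ih1 ih2 =>
      rintro m n ⟨x, h1, h2⟩
      exact ⟨h x, ih1 _ _ h1, ih2 _ _ h2⟩
  | union e1 e2 ih1 ih2 =>
      rintro m n (h1 | h2)
      · exact Or.inl (ih1 _ _ h1)
      · exact Or.inr (ih2 _ _ h2)
  | tc e ih =>
      intro m n hx
      exact Relation.TransGen.lift h (fun a b => ih a b) m n hx
  | conv e ih => intro m n hx; exact ih n m hx
  | inter e1 e2 ih1 ih2 =>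
      rintro m n ⟨h1, h2⟩
      exact ⟨ih1 _ _ h1, ih2 _ _ h2⟩
  | pr1 e ih =>
      rintro m n ⟨rfl, x, hx⟩
      exact ⟨rfl, h x, ih _ _ hx⟩
  | pr2 e ih =>
      rintro m n ⟨rfl, x, hx⟩
      exact ⟨rfl, h x, ih _ _ hx⟩

lemma tree_to_chain {V : Type} [Fintype V] (T : DTree V) (e : UExpr) :
    (∃ m n, e.eval T.E m n) → ∃ m n : ℕ, e.eval (chE (tdepth T)) m n := by
  rintro ⟨m, n, h⟩
  have hh : ∀ a b, T.E a b → chE (tdepth T) (dep T a) (dep T b) := by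
    intro a b hab
    have h1 : relPow T.E (dep T a + 1) T.root b :=
      (relPow_succ_right _ _ _ _).mpr ⟨a, dep_spec T a, hab⟩
    have h2 := pathlen_unique T b _ _ h1 (dep_spec T b)
    exact ⟨h2.symm, dep_le T b⟩
  exact ⟨_, _, eval_hom (dep T) hh e m n h⟩

lemma chain_to_tree {V : Type} [Fintype V] (T : DTree V) (e : UExpr) :
    (∃ m n : ℕ, e.eval (chE (tdepth T)) m n) → ∃ m n, e.eval T.E m n := by
  rintro ⟨m, n, h⟩
  obtain ⟨v, hv⟩ := exists_dep_eq T
  have hpath : relPow T.E (tdepth T) T.root v := hv ▸ dep_spec T v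
  have hanc : ∀ i : ℕ, ∃ u, relPow T.E (tdepth T - i) u v := by
    intro i
    by_cases hi : i ≤ tdepth T
    · have heq : tdepth T = i + (tdepth T - i) := by omega
      rw [heq] at hpath
      obtain ⟨x, _, hx2⟩ := (relPow_add _ _ _ _ _).mp hpath
      exact ⟨x, hx2⟩
    · have heq : tdepth T - i = 0 := by omega
      rw [heq]
      exact ⟨v, rfl⟩
  choose g hg using hanc
  have hh : ∀ i j, chE (tdepth T) i j → T.E (g i) (g j) := by
    rintro i j ⟨rfl, hj⟩
    have h1 : relPow T.E (tdepth T - i) (g i) v := hg i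
    have heq : tdepth T - i = (tdepth T - (i + 1)) + 1 := by omega
    rw [heq] at h1
    obtain ⟨x, hx1, hx2⟩ := h1
    have hx := anc_unique T (tdepth T - (i + 1)) v x (g (i + 1)) hx2 (hg (i + 1))
    rwa [hx] at hx1
  exact ⟨_, _, eval_hom g hh e m n h⟩

lemma chain_mono (e : UExpr) {D D' : ℕ} (h : D ≤ D') :
    (∃ m n, e.eval (chE D) m n) → ∃ m n, e.eval (chE D') m n := by
  rintro ⟨m, n, hx⟩
  refine ⟨m, n, eval_hom (fun i => i) ?_ e m n hx⟩
  rintro a b ⟨h1, h2⟩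
  exact ⟨h1, h2.trans h⟩

/-- If an expression of this language evaluates nonempty on some
unlabeled tree, then there is a k ≥ 0 such that on every unlabeled tree T
the expression evaluates nonempty iff E^k evaluates nonempty on T
(i.e. iff depth(T) ≥ k). -/
theorem stmt7 (e : UExpr)
    (hne : ∃ (V : Type) (_ : Fintype V) (T : DTree V) (m n : V),
      e.eval T.E m n) :
    ∃ k : ℕ, ∀ (V : Type), Fintype V → ∀ T : DTree V,
      ((∃ m n : V, e.eval T.E m n) ↔ (∃ m n : V, relPow T.E k m n)) := by
  classical
  obtain ⟨V0, F0, T0, m0, n0, h0⟩ := hne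
  haveI := F0
  have hS : ∃ D : ℕ, ∃ m n : ℕ, e.eval (chE D) m n :=
    ⟨tdepth T0, tree_to_chain T0 e ⟨m0, n0, h0⟩⟩
  refine ⟨Nat.find hS, ?_⟩
  intro V F T
  haveI := F
  rw [relPow_ne_iff]
  constructor
  · intro h
    exact Nat.find_min' hS (tree_to_chain T e h)
  · intro hk
    exact chain_to_tree T e (chain_mono e hk (Nat.find_spec hS))
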